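/- arXiv:2305.13946 — 9 statements merged into one kernel-verified Lean document; each statement's English description precedes it below -/
import Mathlib

section
/- Let λ* ∈ D satisfy Σ_{i=1}^d (1 − η p(i))/(λ* + η g(i)) = 1, and define x(i) = (1 − η p(i))/(λ* + η g(i)) and ĝ(i) = p(i)·(λ* + η g(i))/(1 − η p(i)). Then x(i)·ĝ(i) = p(i) for every i, and x minimizes the function y ↦ Σ_{i=1}^d (g(i) + ĝ(i))·y(i) − η^{−1} Σ_{i=1}^d log y(i) over all y in the open probability simplex (y(i) > 0 for all i, Σ_{i=1}^d y(i) = 1). -/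
/-- If λ* ∈ D satisfies ∑ i, (1 - η p i)/(λ* + η g i) = 1, then with
x(i) = (1 - η p i)/(λ* + η g i) and ĝ(i) = p(i)·(λ* + η g i)/(1 - η p i) it holds that
x(i)·ĝ(i) = p(i) for all i, and x minimizes
y ↦ ∑ i, (g i + ĝ i) * y i - η⁻¹ * ∑ i, log (y i) over the open probability simplex. -/
theorem stmt_4 (d : ℕ) (hd : 0 < d) (η : ℝ) (hη : 0 < η) (g p : Fin d → ℝ)
    (hp : ∀ i, -1 ≤ η * p i ∧ η * p i ≤ 0)
    (ls : ℝ) (hls : ∀ i, 0 < ls + η * g i)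
    (hsum : ∑ i, (1 - η * p i) / (ls + η * g i) = 1)
    (x ghat : Fin d → ℝ)
    (hx : ∀ i, x i = (1 - η * p i) / (ls + η * g i))
    (hghat : ∀ i, ghat i = p i * (ls + η * g i) / (1 - η * p i)) :
    (∀ i, x i * ghat i = p i) ∧
    ∀ y : Fin d → ℝ, (∀ i, 0 < y i) → (∑ i, y i = 1) →
      ∑ i, (g i + ghat i) * x i - η⁻¹ * ∑ i, Real.log (x i) ≤
        ∑ i, (g i + ghat i) * y i - η⁻¹ * ∑ i, Real.log (y i) := by
  have hnum : ∀ i, (0:ℝ) < 1 - η * p i := fun i => by have := (hp i).2; linarith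
  have hxpos : ∀ i, 0 < x i := fun i => by
    rw [hx i]; exact div_pos (hnum i) (hls i)
  have hxsum : ∑ i, x i = 1 := by
    rw [← hsum]; exact Finset.sum_congr rfl fun i _ => hx i
  have hc : ∀ i, g i + ghat i = η⁻¹ * (x i)⁻¹ - ls / η := by
    intro i
    rw [hx i, hghat i]
    have h1 := (hnum i).ne'
    have h2 := (hls i).ne'
    field_simp
    ring_nf
    field_simp
    ring
  constructor
  · intro i
    rw [hx i, hghat i]
    have h1 := (hnum i).ne'
    have h2 := (hls i).ne'
    field_simp
  · intro y hy hysum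
    have e1 : ∀ (z : Fin d → ℝ), ∑ i, z i = 1 →
        ∑ i, (g i + ghat i) * z i = η⁻¹ * ∑ i, z i / x i - ls / η := by
      intro z hz
      have h : ∀ i ∈ Finset.univ, (g i + ghat i) * z i
          = η⁻¹ * (z i / x i) - ls / η * z i := fun i _ => by rw [hc i]; ring
      rw [Finset.sum_congr rfl h, Finset.sum_sub_distrib, ← Finset.mul_sum,
        ← Finset.mul_sum, hz, mul_one]
    rw [e1 x hxsum, e1 y hysum]
    have hxx : ∑ i, x i / x i = (d : ℝ) := by
      rw [Finset.sum_congr rfl fun i _ => div_self (hxpos i).ne']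
      simp
    have hlog : ∑ i, (Real.log (y i) - Real.log (x i)) ≤ ∑ i, (y i / x i - 1) := by
      apply Finset.sum_le_sum
      intro i _
      have ht : 0 < y i / x i := div_pos (hy i) (hxpos i)
      have := Real.log_le_sub_one_of_pos ht
      rwa [Real.log_div (hy i).ne' (hxpos i).ne'] at this
    rw [Finset.sum_sub_distrib, Finset.sum_sub_distrib] at hlog
    simp only [Finset.sum_const, Finset.card_univ, Fintype.card_fin, nsmul_eq_mul,
      mul_one] at hlog
    have hη' : 0 ≤ η⁻¹ := le_of_lt (inv_pos.mpr hη)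
    rw [hxx]
    nlinarith [mul_le_mul_of_nonneg_left hlog hη']
end

section
/- With λ₀ = 1 − η g(i*), one has λ₀ ∈ D, ψ'(λ₀) ≤ η p(i*) ≤ 0, and consequently λ₀ ≤ λ*, where λ* is the unique zero of ψ' in D. -/
/-- With λ₀ = 1 - η g(i*), one has λ₀ ∈ D, ψ'(λ₀) ≤ η p(i*) ≤ 0, and
consequently λ₀ ≤ λ*, where λ* is the unique zero of ψ' in D. -/
theorem stmt_5 (d : ℕ) (hd : 0 < d) (η : ℝ) (hη : 0 < η) (g p : Fin d → ℝ)
    (hp : ∀ i, -1 ≤ η * p i ∧ η * p i ≤ 0)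
    (istar : Fin d) (histar : ∀ i, g istar ≤ g i)
    (lam0 : ℝ) (hlam0 : lam0 = 1 - η * g istar)
    (ls : ℝ) (hlsD : ∀ i, 0 < ls + η * g i)
    (hls : 1 - ∑ i, (1 - η * p i) / (ls + η * g i) = 0) :
    (∀ i, 0 < lam0 + η * g i) ∧
    (1 - ∑ i, (1 - η * p i) / (lam0 + η * g i) ≤ η * p istar) ∧
    η * p istar ≤ 0 ∧
    lam0 ≤ ls := by
  have hD : ∀ i, 0 < lam0 + η * g i := by
    intro i
    have h1 : η * g istar ≤ η * g i := by
      have := histar i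
      nlinarith
    nlinarith [h1]
  have hnum : ∀ i : Fin d, (1:ℝ) ≤ 1 - η * p i := by
    intro i; have := (hp i).2; linarith
  have hsum : (1 - η * p istar) / (lam0 + η * g istar) ≤
      ∑ i, (1 - η * p i) / (lam0 + η * g i) := by
    apply Finset.single_le_sum (f := fun i => (1 - η * p i) / (lam0 + η * g i))
    · intro i _
      exact div_nonneg (by linarith [hnum i]) (le_of_lt (hD i))
    · exact Finset.mem_univ istar
  have hden : lam0 + η * g istar = 1 := by rw [hlam0]; ring
  have hterm : (1 - η * p istar) / (lam0 + η * g istar) = 1 - η * p istar := by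
    rw [hden, div_one]
  have h2 : 1 - ∑ i, (1 - η * p i) / (lam0 + η * g i) ≤ η * p istar := by
    have := hsum
    rw [hterm] at this
    linarith
  refine ⟨hD, h2, (hp istar).2, ?_⟩
  by_contra hlt
  push_neg at hlt
  have hstrict : ∑ i, (1 - η * p i) / (lam0 + η * g i) <
      ∑ i, (1 - η * p i) / (ls + η * g i) := by
    apply Finset.sum_lt_sum_of_nonempty
    · exact Finset.univ_nonempty_iff.mpr ⟨⟨0, hd⟩⟩
    · intro i _
      apply div_lt_div_of_pos_left (by linarith [hnum i]) (hlsD i)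
      linarith [hD i]
  linarith [(hp istar).2]
end

section
/- The Newton iterates satisfy: for every t ≥ 0, λ_t ∈ D, ψ'(λ_t) ≤ 0, λ_t ≤ λ_{t+1}, and λ_t ≤ λ*, where λ* is the unique zero of ψ' in D. -/
/-- The Newton iterates λ_{t+1} = λ_t - ψ'(λ_t)/ψ''(λ_t), started at
λ₀ = 1 - η g(i*), satisfy for every t ≥ 0: λ_t ∈ D, ψ'(λ_t) ≤ 0, λ_t ≤ λ_{t+1},
and λ_t ≤ λ*, where λ* is the unique zero of ψ' in D. -/
theorem stmt_6 (d : ℕ) (hd : 0 < d) (η : ℝ) (hη : 0 < η) (g p : Fin d → ℝ)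
    (hp : ∀ i, -1 ≤ η * p i ∧ η * p i ≤ 0)
    (istar : Fin d) (histar : ∀ i, g istar ≤ g i)
    (lam : ℕ → ℝ) (hlam0 : lam 0 = 1 - η * g istar)
    (hrec : ∀ t : ℕ, lam (t + 1) = lam t -
      (1 - ∑ i, (1 - η * p i) / (lam t + η * g i)) /
        (∑ i, (1 - η * p i) / (lam t + η * g i) ^ 2))
    (ls : ℝ) (hlsD : ∀ i, 0 < ls + η * g i)
    (hls : 1 - ∑ i, (1 - η * p i) / (ls + η * g i) = 0) :
    ∀ t : ℕ, (∀ i, 0 < lam t + η * g i) ∧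
      (1 - ∑ i, (1 - η * p i) / (lam t + η * g i) ≤ 0) ∧
      lam t ≤ lam (t + 1) ∧
      lam t ≤ ls := by
  have hne : Nonempty (Fin d) := ⟨⟨0, hd⟩⟩
  have hc : ∀ i, (1:ℝ) ≤ 1 - η * p i := fun i => by linarith [(hp i).2]
  set f : ℝ → ℝ := fun x => 1 - ∑ i, (1 - η * p i) / (x + η * g i) with hf
  -- concavity-type bound
  have key : ∀ x y : ℝ, (∀ i, 0 < x + η * g i) → x ≤ y →
      f y ≤ f x + (y - x) * ∑ i, (1 - η * p i) / (x + η * g i) ^ 2 := by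
    intro x y hx hxy
    have hy : ∀ i, 0 < y + η * g i := fun i => by have := hx i; linarith
    simp only [hf]
    rw [Finset.mul_sum]
    have : ∑ i : Fin d, (1 - η * p i) / (x + η * g i) - ∑ i, (1 - η * p i) / (y + η * g i)
        ≤ ∑ i : Fin d, (y - x) * ((1 - η * p i) / (x + η * g i) ^ 2) := by
      rw [← Finset.sum_sub_distrib]
      apply Finset.sum_le_sum
      intro i _
      have hxi := hx i; have hyi := hy i; have hci := hc i
      have e1 : (1 - η * p i) / (x + η * g i) - (1 - η * p i) / (y + η * g i)
          = (1 - η * p i) * (y - x) / ((x + η * g i) * (y + η * g i)) := by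
        field_simp; ring
      have e2 : (y - x) * ((1 - η * p i) / (x + η * g i) ^ 2)
          = (1 - η * p i) * (y - x) / ((x + η * g i) * (x + η * g i)) := by
        field_simp
      rw [e1, e2]
      gcongr
      all_goals nlinarith
    linarith
  -- strict monotonicity
  have mono : ∀ x y : ℝ, (∀ i, 0 < x + η * g i) → x < y → f x < f y := by
    intro x y hx hxy
    have hy : ∀ i, 0 < y + η * g i := fun i => by have := hx i; linarith
    simp only [hf]
    have : ∑ i : Fin d, (1 - η * p i) / (y + η * g i)
        < ∑ i : Fin d, (1 - η * p i) / (x + η * g i) := by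
      apply Finset.sum_lt_sum_of_nonempty Finset.univ_nonempty
      intro i _
      have hxi := hx i; have hyi := hy i; have hci := hc i
      apply div_lt_div_of_pos_left (by linarith) hxi (by linarith)
    linarith
  -- positivity of ψ''
  have hS2 : ∀ x : ℝ, (∀ i, 0 < x + η * g i) →
      0 < ∑ i : Fin d, (1 - η * p i) / (x + η * g i) ^ 2 := by
    intro x hx
    apply Finset.sum_pos _ Finset.univ_nonempty
    intro i _
    have := hx i; have := hc i
    positivity
  -- invariant
  have inv : ∀ t : ℕ, (∀ i, 0 < lam t + η * g i) ∧ f (lam t) ≤ 0 := by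
    intro t
    induction t with
    | zero =>
      constructor
      · intro i
        rw [hlam0]
        have := histar i
        nlinarith
      · have hD0 : ∀ i, 0 < lam 0 + η * g i := by
          intro i; rw [hlam0]; have := histar i; nlinarith
        have h1 : (1 - η * p istar) / (lam 0 + η * g istar)
            ≤ ∑ i : Fin d, (1 - η * p i) / (lam 0 + η * g i) := by
          apply Finset.single_le_sum (f := fun i => (1 - η * p i) / (lam 0 + η * g i))
            (fun i _ => by have := hD0 i; have := hc i; positivity) (Finset.mem_univ istar)
        have h2 : lam 0 + η * g istar = 1 := by rw [hlam0]; ring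
        rw [h2] at h1
        simp only [hf]
        have := hc istar
        simp only [div_one] at h1
        linarith
    | succ t ih =>
      obtain ⟨hD, hfle⟩ := ih
      set S2 := ∑ i : Fin d, (1 - η * p i) / (lam t + η * g i) ^ 2 with hS2def
      have hS2pos : 0 < S2 := hS2 _ hD
      have hstep : lam (t + 1) = lam t - f (lam t) / S2 := hrec t
      have hmonostep : lam t ≤ lam (t + 1) := by
        rw [hstep]
        have : f (lam t) / S2 ≤ 0 := div_nonpos_of_nonpos_of_nonneg hfle hS2pos.le
        linarith
      have hDnext : ∀ i, 0 < lam (t + 1) + η * g i := by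
        intro i; have := hD i; linarith [hmonostep]
      refine ⟨hDnext, ?_⟩
      have hkey := key (lam t) (lam (t + 1)) hD hmonostep
      rw [← hS2def] at hkey
      have heq : (lam (t + 1) - lam t) * S2 = - f (lam t) := by
        rw [hstep]; field_simp; ring
      linarith
  intro t
  obtain ⟨hD, hfle⟩ := inv t
  obtain ⟨hD', hfle'⟩ := inv (t + 1)
  have hmonostep : lam t ≤ lam (t + 1) := by
    have hS2pos := hS2 _ hD
    rw [hrec t]
    have : f (lam t) / (∑ i : Fin d, (1 - η * p i) / (lam t + η * g i) ^ 2) ≤ 0 :=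
      div_nonpos_of_nonpos_of_nonneg hfle hS2pos.le
    simp only [hf] at this ⊢
    linarith
  have hls' : lam t ≤ ls := by
    by_contra h
    push_neg at h
    have := mono ls (lam t) hlsD h
    have : f ls = 0 := hls
    simp only [hf] at *
    linarith [mono ls (lam t) hlsD h]
  exact ⟨hD, hfle, hmonostep, hls'⟩
end

section
/- Let λ ∈ D with ψ'(λ) < 0, and set λ⁺ = λ − ψ'(λ)/ψ''(λ). Then λ⁺ ∈ D, ψ'(λ⁺) ≤ 0, and |ψ'(λ⁺)·ψ''(λ⁺)| ≤ (1/4)·|ψ'(λ)·ψ''(λ)|. -/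
/-- Let λ ∈ D with ψ'(λ) < 0, and set λ⁺ = λ - ψ'(λ)/ψ''(λ). Then λ⁺ ∈ D,
ψ'(λ⁺) ≤ 0, and |ψ'(λ⁺)·ψ''(λ⁺)| ≤ (1/4)·|ψ'(λ)·ψ''(λ)|. -/
theorem stmt_7 (d : ℕ) (hd : 0 < d) (η : ℝ) (hη : 0 < η) (g p : Fin d → ℝ)
    (hp : ∀ i, -1 ≤ η * p i ∧ η * p i ≤ 0)
    (l : ℝ) (hl : ∀ i, 0 < l + η * g i)
    (hneg : 1 - ∑ i, (1 - η * p i) / (l + η * g i) < 0)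
    (lp : ℝ)
    (hlp : lp = l - (1 - ∑ i, (1 - η * p i) / (l + η * g i)) /
      (∑ i, (1 - η * p i) / (l + η * g i) ^ 2)) :
    (∀ i, 0 < lp + η * g i) ∧
    (1 - ∑ i, (1 - η * p i) / (lp + η * g i) ≤ 0) ∧
    |(1 - ∑ i, (1 - η * p i) / (lp + η * g i)) *
        (∑ i, (1 - η * p i) / (lp + η * g i) ^ 2)| ≤
      (1 / 4) * |(1 - ∑ i, (1 - η * p i) / (l + η * g i)) *
        (∑ i, (1 - η * p i) / (l + η * g i) ^ 2)| := by
  have ha : ∀ i, (1:ℝ) ≤ 1 - η * p i := fun i => by linarith [(hp i).2]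
  have hne : (Finset.univ : Finset (Fin d)).Nonempty := ⟨⟨0, hd⟩, Finset.mem_univ _⟩
  set P : ℝ := ∑ i, (1 - η * p i) / (l + η * g i) with hPdef
  set S : ℝ := ∑ i, (1 - η * p i) / (l + η * g i) ^ 2 with hSdef
  have hS : 0 < S :=
    Finset.sum_pos (fun i _ => div_pos (by linarith [ha i]) (pow_pos (hl i) 2)) hne
  set t : ℝ := (P - 1) / S with htdef
  have ht : 0 < t := div_pos (by linarith) hS
  have hlpt : lp = l + t := by rw [hlp, htdef]; ring
  have hx' : ∀ i, lp + η * g i = (l + η * g i) + t := fun i => by rw [hlpt]; ring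
  have hxt : ∀ i, 0 < l + η * g i + t := fun i => by linarith [hl i]
  have hpos : ∀ i, 0 < lp + η * g i := fun i => by rw [hx' i]; exact hxt i
  set A : ℝ := ∑ i, (1 - η * p i) / ((l + η * g i) ^ 2 * (l + η * g i + t)) with hAdef
  set B : ℝ := ∑ i, (1 - η * p i) / (lp + η * g i) ^ 2 with hBdef
  have hA0 : 0 ≤ A :=
    Finset.sum_nonneg fun i _ => div_nonneg (by linarith [ha i])
      (mul_pos (pow_pos (hl i) 2) (hxt i)).le
  have hB0 : 0 ≤ B :=
    Finset.sum_nonneg fun i _ => div_nonneg (by linarith [ha i]) (pow_pos (hpos i) 2).le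
  have htS : t * S = P - 1 := by rw [htdef]; field_simp
  -- per-term expansion of ψ'(lp)
  have hterm : ∀ i, (1 - η * p i) / (lp + η * g i) =
      (1 - η * p i) / (l + η * g i) - t * ((1 - η * p i) / (l + η * g i) ^ 2)
      + t ^ 2 * ((1 - η * p i) / ((l + η * g i) ^ 2 * (l + η * g i + t))) := by
    intro i
    rw [hx' i]
    have h1 := (hl i).ne'
    have h2 := (hxt i).ne'
    field_simp
    ring
  have hsum : 1 - ∑ i, (1 - η * p i) / (lp + η * g i) = -(t ^ 2 * A) := by
    have e1 : ∑ i, (1 - η * p i) / (lp + η * g i) = P - t * S + t ^ 2 * A := by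
      rw [hPdef, hSdef, hAdef, Finset.mul_sum, Finset.mul_sum,
        ← Finset.sum_sub_distrib, ← Finset.sum_add_distrib]
      exact Finset.sum_congr rfl fun i _ => hterm i
    rw [e1]
    linarith [htS]
  -- pointwise inequality
  have hpt : ∀ i, t * ((1 - η * p i) / ((l + η * g i) ^ 2 * (l + η * g i + t)))
      + (1 - η * p i) / (lp + η * g i) ^ 2 ≤ (1 - η * p i) / (l + η * g i) ^ 2 := by
    intro i
    rw [hx' i, ← sub_nonneg]
    have h1 := (hl i).ne'
    have h2 := (hxt i).ne'
    have key : (1 - η * p i) / (l + η * g i) ^ 2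
        - (t * ((1 - η * p i) / ((l + η * g i) ^ 2 * (l + η * g i + t)))
          + (1 - η * p i) / (l + η * g i + t) ^ 2)
        = (1 - η * p i) * t * (l + η * g i) /
          ((l + η * g i) ^ 2 * (l + η * g i + t) ^ 2) := by
      field_simp
      ring
    rw [key]
    apply div_nonneg
    · exact mul_nonneg (mul_nonneg (by linarith [ha i]) ht.le) (hl i).le
    · exact (mul_pos (pow_pos (hl i) 2) (pow_pos (hxt i) 2)).le
  have hAB : t * A + B ≤ S := by
    have : ∑ i, (t * ((1 - η * p i) / ((l + η * g i) ^ 2 * (l + η * g i + t)))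
        + (1 - η * p i) / (lp + η * g i) ^ 2) ≤ S :=
      Finset.sum_le_sum fun i _ => hpt i
    calc t * A + B = ∑ i, (t * ((1 - η * p i) / ((l + η * g i) ^ 2 * (l + η * g i + t)))
          + (1 - η * p i) / (lp + η * g i) ^ 2) := by
          rw [hAdef, hBdef, Finset.mul_sum, ← Finset.sum_add_distrib]
      _ ≤ S := this
  refine ⟨hpos, ?_, ?_⟩
  · rw [hsum]; exact neg_nonpos.2 (mul_nonneg (sq_nonneg t) hA0)
  · rw [hsum]
    have hab : 0 ≤ t ^ 2 * A * B := mul_nonneg (mul_nonneg (sq_nonneg t) hA0) hB0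
    have habs1 : |(-(t ^ 2 * A)) * B| = t ^ 2 * A * B := by
      rw [neg_mul, abs_neg, abs_of_nonneg hab]
    have habs2 : |(1 - P) * S| = t * S * S := by
      rw [abs_of_nonpos (by nlinarith)]
      have e : -((1 - P) * S) = (P - 1) * S := by ring
      rw [e, ← htS]
    rw [habs1, habs2]
    have hu : 0 ≤ t * A := mul_nonneg ht.le hA0
    have key : t * A * B ≤ S * S / 4 := by
      nlinarith [sq_nonneg (t * A - B), hAB, hu, hB0, add_nonneg hu hB0, hS]
    calc t ^ 2 * A * B = t * (t * A * B) := by ring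
      _ ≤ t * (S * S / 4) := mul_le_mul_of_nonneg_left key ht.le
      _ = 1 / 4 * (t * S * S) := by ring
end

section
/- For every t ≥ 0, the Newton iterates satisfy |ψ'(λ_t)·ψ''(λ_t)| ≤ 4^{−t}·|ψ'(λ₀)·ψ''(λ₀)|. -/
set_option maxHeartbeats 1000000 in
lemma newton_step {d : ℕ} (hd : 0 < d) (a u : Fin d → ℝ) (δ : ℝ)
    (ha : ∀ i, 1 ≤ a i) (hu : ∀ i, 0 < u i)
    (hS : 1 ≤ ∑ i, a i / u i)
    (hδ : δ = (∑ i, a i / u i - 1) / (∑ i, a i / (u i) ^ 2)) :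
    (∀ i, 0 < u i + δ) ∧ (1 ≤ ∑ i, a i / (u i + δ)) ∧
      |(1 - ∑ i, a i / (u i + δ)) * ∑ i, a i / (u i + δ) ^ 2| ≤
        (1 / 4) * |(1 - ∑ i, a i / u i) * ∑ i, a i / (u i) ^ 2| := by
  have hne : (Finset.univ : Finset (Fin d)).Nonempty := by
    haveI : NeZero d := ⟨hd.ne'⟩
    exact Finset.univ_nonempty
  set S := ∑ i, a i / u i with hSdef
  set V := ∑ i, a i / (u i) ^ 2 with hVdef
  have hVpos : 0 < V := by
    apply Finset.sum_pos (fun i _ => ?_) hne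
    exact div_pos (by linarith [ha i]) (pow_pos (hu i) 2)
  have hδnn : 0 ≤ δ := by
    rw [hδ]; exact div_nonneg (by linarith) hVpos.le
  have hupos : ∀ i, 0 < u i + δ := fun i => by linarith [hu i]
  have e3 : δ * V = S - 1 := by
    rw [hδ]; field_simp
  set P := ∑ i, a i / (u i * (u i + δ)) with hPdef
  set T := ∑ i, a i / ((u i) ^ 2 * (u i + δ)) with hTdef
  set S' := ∑ i, a i / (u i + δ) with hS'def
  set W := ∑ i, a i / (u i + δ) ^ 2 with hWdef
  have e1 : S - S' = δ * P := by
    rw [hSdef, hS'def, hPdef, Finset.mul_sum, ← Finset.sum_sub_distrib]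
    refine Finset.sum_congr rfl (fun i _ => ?_)
    have h1 := (hu i).ne'
    have h2 := (hupos i).ne'
    field_simp
    ring
  have e2 : V - P = δ * T := by
    rw [hVdef, hPdef, hTdef, Finset.mul_sum, ← Finset.sum_sub_distrib]
    refine Finset.sum_congr rfl (fun i _ => ?_)
    have h1 := (hu i).ne'
    have h2 := (hupos i).ne'
    field_simp
    ring
  have hTnn : 0 ≤ T := Finset.sum_nonneg fun i _ =>
    div_nonneg (by linarith [ha i]) (mul_nonneg (pow_pos (hu i) 2).le (hupos i).le)
  have hWnn : 0 ≤ W := Finset.sum_nonneg fun i _ =>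
    div_nonneg (by linarith [ha i]) (pow_pos (hupos i) 2).le
  have key : 1 - S' = -(δ ^ 2 * T) := by
    linear_combination e1 - δ * e2 + e3
  refine ⟨hupos, by nlinarith [mul_nonneg (sq_nonneg δ) hTnn], ?_⟩
  -- core inequality
  set A := ∑ i, (a i / (u i) ^ 2) * (δ / (u i + δ)) with hAdef
  set B := ∑ i, (a i / (u i) ^ 2) * (u i / (u i + δ)) with hBdef
  have hA : δ * T = A := by
    rw [hTdef, hAdef, Finset.mul_sum]
    refine Finset.sum_congr rfl (fun i _ => ?_)
    have h1 := (hu i).ne'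
    have h2 := (hupos i).ne'
    field_simp
  have hAnn : 0 ≤ A := by
    rw [← hA]; exact mul_nonneg hδnn hTnn
  have hBnn : 0 ≤ B :=
    Finset.sum_nonneg fun i _ =>
      mul_nonneg (div_nonneg (by linarith [ha i]) (pow_pos (hu i) 2).le)
        (div_nonneg (hu i).le (hupos i).le)
  have hAB : A + B = V := by
    rw [hAdef, hBdef, hVdef, ← Finset.sum_add_distrib]
    refine Finset.sum_congr rfl (fun i _ => ?_)
    have h1 := (hu i).ne'
    have h2 := (hupos i).ne'
    field_simp
    ring
  have hWB : W ≤ B := by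
    rw [hWdef, hBdef]
    refine Finset.sum_le_sum (fun i _ => ?_)
    have h1 := (hu i).ne'
    have h2 := (hupos i).ne'
    have ha' := ha i
    have heq : a i / (u i + δ) ^ 2 = (a i / (u i) ^ 2) * (u i / (u i + δ)) ^ 2 := by
      field_simp
    rw [heq]
    have ht0 : 0 ≤ u i / (u i + δ) := div_nonneg (hu i).le (hupos i).le
    have ht1 : u i / (u i + δ) ≤ 1 := by
      rw [div_le_one (hupos i)]; linarith
    have hv : 0 ≤ a i / (u i) ^ 2 := div_nonneg (by linarith) (pow_pos (hu i) 2).le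
    have : (u i / (u i + δ)) ^ 2 ≤ u i / (u i + δ) := by nlinarith
    exact mul_le_mul_of_nonneg_left this hv
  clear_value S V P T S' W A B
  -- |(1-S')*W| = δ^2*T*W ≤ (1/4) δ V^2 = (1/4)|(1-S)*V|
  have lhs_eq : |(1 - S') * W| = δ ^ 2 * T * W := by
    rw [key]
    rw [abs_of_nonpos (by nlinarith [mul_nonneg (mul_nonneg (sq_nonneg δ) hTnn) hWnn])]
    ring
  have rhs_eq : |(1 - S) * V| = δ * V * V := by
    have hle : (1 - S) * V ≤ 0 := by
      nlinarith [mul_nonneg (by linarith : (0:ℝ) ≤ S - 1) hVpos.le]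
    rw [abs_of_nonpos hle]
    linear_combination (-V) * e3
  rw [lhs_eq, rhs_eq]
  -- δ^2 T W = δ * (A * W) ≤ δ * (A*B) ≤ δ * V^2/4
  have h1 : A * W ≤ A * B := by nlinarith
  have h2 : A * B ≤ (1/4) * (V * V) := by nlinarith [sq_nonneg (A - B)]
  have h3 : δ ^ 2 * T * W = δ * (A * W) := by rw [← hA]; ring
  rw [h3]
  have : δ * (A * W) ≤ δ * ((1/4) * (V * V)) :=
    mul_le_mul_of_nonneg_left (le_trans h1 h2) hδnn
  linarith

/-- For every t ≥ 0, the Newton iterates (started at λ₀ = 1 - η g(i*))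
satisfy |ψ'(λ_t)·ψ''(λ_t)| ≤ 4^{-t}·|ψ'(λ₀)·ψ''(λ₀)|. -/
theorem stmt_8 (d : ℕ) (hd : 0 < d) (η : ℝ) (hη : 0 < η) (g p : Fin d → ℝ)
    (hp : ∀ i, -1 ≤ η * p i ∧ η * p i ≤ 0)
    (istar : Fin d) (histar : ∀ i, g istar ≤ g i)
    (lam : ℕ → ℝ) (hlam0 : lam 0 = 1 - η * g istar)
    (hrec : ∀ t : ℕ, lam (t + 1) = lam t -
      (1 - ∑ i, (1 - η * p i) / (lam t + η * g i)) /
        (∑ i, (1 - η * p i) / (lam t + η * g i) ^ 2)) :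
    ∀ t : ℕ,
      |(1 - ∑ i, (1 - η * p i) / (lam t + η * g i)) *
          (∑ i, (1 - η * p i) / (lam t + η * g i) ^ 2)| ≤
        (1 / 4) ^ t * |(1 - ∑ i, (1 - η * p i) / (lam 0 + η * g i)) *
          (∑ i, (1 - η * p i) / (lam 0 + η * g i) ^ 2)| := by
  have ha : ∀ i, 1 ≤ 1 - η * p i := fun i => by linarith [(hp i).2]
  -- main invariant by induction
  have main : ∀ t : ℕ, (∀ i, 0 < lam t + η * g i) ∧
      (1 ≤ ∑ i, (1 - η * p i) / (lam t + η * g i)) ∧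
      |(1 - ∑ i, (1 - η * p i) / (lam t + η * g i)) *
          (∑ i, (1 - η * p i) / (lam t + η * g i) ^ 2)| ≤
        (1 / 4) ^ t * |(1 - ∑ i, (1 - η * p i) / (lam 0 + η * g i)) *
          (∑ i, (1 - η * p i) / (lam 0 + η * g i) ^ 2)| := by
    intro t
    induction t with
    | zero =>
      have hpos : ∀ i, 0 < lam 0 + η * g i := fun i => by
        rw [hlam0]
        nlinarith [histar i, hη]
      refine ⟨hpos, ?_, by simp⟩
      have histareq : lam 0 + η * g istar = 1 := by rw [hlam0]; ring
      have hterm : (1 : ℝ) ≤ (1 - η * p istar) / (lam 0 + η * g istar) := by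
        rw [histareq, div_one]; exact ha istar
      calc (1 : ℝ) ≤ (1 - η * p istar) / (lam 0 + η * g istar) := hterm
        _ ≤ ∑ i, (1 - η * p i) / (lam 0 + η * g i) :=
          Finset.single_le_sum (f := fun i => (1 - η * p i) / (lam 0 + η * g i))
            (fun i _ => div_nonneg (by linarith [ha i]) (hpos i).le)
            (Finset.mem_univ istar)
    | succ t ih =>
      obtain ⟨hpos, hS, hbound⟩ := ih
      set u : Fin d → ℝ := fun i => lam t + η * g i with hu_def
      set a : Fin d → ℝ := fun i => 1 - η * p i with ha_def
      set δ : ℝ := (∑ i, a i / u i - 1) / (∑ i, a i / (u i) ^ 2) with hδ_def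
      have hstep := newton_step hd a u δ ha hpos hS hδ_def
      have hlam1 : ∀ i, lam (t + 1) + η * g i = u i + δ := by
        intro i
        have := hrec t
        rw [this, hu_def, hδ_def]
        simp only
        ring
      obtain ⟨hpos', hS', hdec⟩ := hstep
      have eq1 : (∑ i, (1 - η * p i) / (lam (t+1) + η * g i)) = ∑ i, a i / (u i + δ) :=
        Finset.sum_congr rfl (fun i _ => by rw [hlam1 i, ha_def])
      have eq2 : (∑ i, (1 - η * p i) / (lam (t+1) + η * g i) ^ 2) = ∑ i, a i / (u i + δ) ^ 2 :=
        Finset.sum_congr rfl (fun i _ => by rw [hlam1 i, ha_def])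
      refine ⟨fun i => by rw [hlam1 i]; exact hpos' i, by rw [eq1]; exact hS', ?_⟩
      rw [eq1, eq2]
      calc |(1 - ∑ i, a i / (u i + δ)) * ∑ i, a i / (u i + δ) ^ 2|
          ≤ (1/4) * |(1 - ∑ i, a i / u i) * ∑ i, a i / (u i) ^ 2| := hdec
        _ ≤ (1/4) * ((1/4) ^ t * |(1 - ∑ i, (1 - η * p i) / (lam 0 + η * g i)) *
              (∑ i, (1 - η * p i) / (lam 0 + η * g i) ^ 2)|) := by
            apply mul_le_mul_of_nonneg_left _ (by norm_num)
            exact hbound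
        _ = (1/4) ^ (t+1) * |(1 - ∑ i, (1 - η * p i) / (lam 0 + η * g i)) *
              (∑ i, (1 - η * p i) / (lam 0 + η * g i) ^ 2)| := by ring
  exact fun t => (main t).2.2
end

section
/- With λ₀ = 1 − η g(i*), the initial point satisfies |ψ'(λ₀)| < 2d and ψ''(λ₀) ≤ 2d. -/
/-- With λ₀ = 1 - η g(i*), the initial point satisfies |ψ'(λ₀)| < 2d and
ψ''(λ₀) ≤ 2d. -/
theorem stmt_9 (d : ℕ) (hd : 0 < d) (η : ℝ) (hη : 0 < η) (g p : Fin d → ℝ)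
    (hp : ∀ i, -1 ≤ η * p i ∧ η * p i ≤ 0)
    (istar : Fin d) (histar : ∀ i, g istar ≤ g i)
    (lam0 : ℝ) (hlam0 : lam0 = 1 - η * g istar) :
    |1 - ∑ i, (1 - η * p i) / (lam0 + η * g i)| < 2 * (d : ℝ) ∧
    ∑ i, (1 - η * p i) / (lam0 + η * g i) ^ 2 ≤ 2 * (d : ℝ) := by
  have hden : ∀ i, 1 ≤ lam0 + η * g i := by
    intro i
    rw [hlam0]
    nlinarith [histar i]
  have hnum : ∀ i, 1 ≤ 1 - η * p i ∧ 1 - η * p i ≤ 2 := by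
    intro i
    constructor <;> linarith [(hp i).1, (hp i).2]
  have hterm : ∀ i, 0 < (1 - η * p i) / (lam0 + η * g i) ∧
      (1 - η * p i) / (lam0 + η * g i) ≤ 2 := by
    intro i
    have hD : (0:ℝ) < lam0 + η * g i := lt_of_lt_of_le one_pos (hden i)
    constructor
    · exact div_pos (by linarith [(hnum i).1]) hD
    · rw [div_le_iff₀ hD]
      nlinarith [(hnum i).2, hden i]
  have hS_pos : 0 < ∑ i, (1 - η * p i) / (lam0 + η * g i) := by
    apply Finset.sum_pos (fun i _ => (hterm i).1)
    exact Finset.univ_nonempty_iff.mpr ⟨⟨0, hd⟩⟩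
  have hS_le : ∑ i, (1 - η * p i) / (lam0 + η * g i) ≤ 2 * (d : ℝ) := by
    calc ∑ i, (1 - η * p i) / (lam0 + η * g i) ≤ ∑ _i : Fin d, (2:ℝ) :=
          Finset.sum_le_sum (fun i _ => (hterm i).2)
      _ = 2 * (d : ℝ) := by simp [mul_comm]
  have hd1 : (1:ℝ) ≤ d := by exact_mod_cast hd
  constructor
  · rw [abs_lt]
    constructor <;> linarith
  · calc ∑ i, (1 - η * p i) / (lam0 + η * g i) ^ 2 ≤ ∑ _i : Fin d, (2:ℝ) := by
          apply Finset.sum_le_sum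
          intro i _
          have hD : (0:ℝ) < lam0 + η * g i := lt_of_lt_of_le one_pos (hden i)
          rw [div_le_iff₀ (by positivity)]
          nlinarith [(hnum i).2, hden i]
      _ = 2 * (d : ℝ) := by simp [mul_comm]
end

section
/- For every λ ∈ D with ψ'(λ) ≤ 0 (equivalently, Σ_{i=1}^d (1 − η p(i))/(λ + η g(i)) ≥ 1), one has ψ''(λ) ≥ 1/(2d). -/
/-- For every λ ∈ D with ψ'(λ) ≤ 0 (equivalently
∑ i, (1 - η p i)/(λ + η g i) ≥ 1), one has ψ''(λ) ≥ 1/(2d). -/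
theorem stmt_10 (d : ℕ) (hd : 0 < d) (η : ℝ) (hη : 0 < η) (g p : Fin d → ℝ)
    (hp : ∀ i, -1 ≤ η * p i ∧ η * p i ≤ 0)
    (l : ℝ) (hl : ∀ i, 0 < l + η * g i)
    (hsign : 1 - ∑ i, (1 - η * p i) / (l + η * g i) ≤ 0) :
    1 / (2 * (d : ℝ)) ≤ ∑ i, (1 - η * p i) / (l + η * g i) ^ 2 := by
  set a : Fin d → ℝ := fun i => 1 - η * p i with ha
  set x : Fin d → ℝ := fun i => l + η * g i with hx
  have ha0 : ∀ i, 0 ≤ a i := fun i => by have := (hp i).2; simp [ha]; linarith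
  have ha2 : ∀ i, a i ≤ 2 := fun i => by have := (hp i).1; simp [ha]; linarith
  have key := Finset.sum_mul_sq_le_sq_mul_sq Finset.univ
    (fun i => Real.sqrt (a i)) (fun i => Real.sqrt (a i) / x i)
  have h1 : ∀ i : Fin d, Real.sqrt (a i) * (Real.sqrt (a i) / x i) = a i / x i := by
    intro i
    rw [mul_div_assoc', Real.mul_self_sqrt (ha0 i)]
  have h2 : ∀ i : Fin d, Real.sqrt (a i) ^ 2 = a i := fun i => Real.sq_sqrt (ha0 i)
  have h3 : ∀ i : Fin d, (Real.sqrt (a i) / x i) ^ 2 = a i / x i ^ 2 := by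
    intro i; rw [div_pow, Real.sq_sqrt (ha0 i)]
  simp only [h1, h2, h3] at key
  have hsum1 : (1:ℝ) ≤ ∑ i, a i / x i := by linarith
  have hS : (∑ i, a i) ≤ 2 * d := by
    calc (∑ i, a i) ≤ ∑ _i : Fin d, (2:ℝ) := Finset.sum_le_sum fun i _ => ha2 i
    _ = 2 * d := by simp [mul_comm]
  have hQ : 0 ≤ ∑ i, a i / x i ^ 2 :=
    Finset.sum_nonneg fun i _ => div_nonneg (ha0 i) (sq_nonneg _)
  have h2d : (0:ℝ) < 2 * d := by positivity
  have : (1:ℝ) ≤ 2 * d * ∑ i, a i / x i ^ 2 := by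
    calc (1:ℝ) ≤ (∑ i, a i / x i) ^ 2 := by nlinarith
    _ ≤ (∑ i, a i) * ∑ i, a i / x i ^ 2 := key
    _ ≤ 2 * d * ∑ i, a i / x i ^ 2 := mul_le_mul_of_nonneg_right hS hQ
  rw [div_le_iff₀ h2d]
  linarith
end

section
/- For every t ≥ 0, the Newton decrement of the Newton iterates satisfies δ(λ_t)² = ψ'(λ_t)²/ψ''(λ_t) < (2d)⁷/16^t. -/
open Finset

/-- One Newton step: preserves `1 ≤ S`, gives nonneg step, and contracts the
squared Newton decrement by `h²/m²`. -/
lemma newton_step_s11 {d : ℕ} (hd : 0 < d) (w x : Fin d → ℝ)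
    (hw1 : ∀ i, 1 ≤ w i)
    (m h : ℝ) (hm : 0 < m) (hxm : ∀ i, m ≤ x i)
    (hS : 1 ≤ ∑ i, w i / x i)
    (hh : h = ((∑ i, w i / x i) - 1) / (∑ i, w i / (x i) ^ 2)) :
    0 ≤ h ∧ (1 ≤ ∑ i, w i / (x i + h)) ∧
    ((∑ i, w i / (x i + h)) - 1) ^ 2 / (∑ i, w i / (x i + h) ^ 2)
      ≤ (((∑ i, w i / x i) - 1) ^ 2 / (∑ i, w i / (x i) ^ 2)) * (h ^ 2 / m ^ 2) := by
  have hx : ∀ i, 0 < x i := fun i => lt_of_lt_of_le hm (hxm i)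
  have hw0 : ∀ i, 0 < w i := fun i => lt_of_lt_of_le one_pos (hw1 i)
  have hne : (Finset.univ : Finset (Fin d)).Nonempty := by
    simpa [Finset.univ_nonempty_iff] using (Fin.pos_iff_nonempty.mp hd)
  have hA : 0 < ∑ i, w i / (x i) ^ 2 :=
    Finset.sum_pos (fun i _ => div_pos (hw0 i) (by have := hx i; positivity)) hne
  set A : ℝ := ∑ i, w i / (x i) ^ 2 with hAdef
  set S : ℝ := ∑ i, w i / x i with hSdef
  have hh0 : 0 ≤ h := by rw [hh]; exact div_nonneg (by linarith) hA.le
  have hxh : ∀ i, 0 < x i + h := fun i => by have := hx i; linarith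
  have hhA : h * A = S - 1 := by rw [hh, div_mul_cancel₀ _ hA.ne']
  -- the identity  S' - 1 = h² * B
  set B : ℝ := ∑ i, w i / ((x i) ^ 2 * (x i + h)) with hBdef
  have hB0 : 0 ≤ B := Finset.sum_nonneg fun i _ =>
    div_nonneg (hw0 i).le (by have := hx i; have := hxh i; positivity)
  have key : ∀ i : Fin d, w i / (x i + h)
      = w i / x i - h * (w i / (x i) ^ 2) + h ^ 2 * (w i / ((x i) ^ 2 * (x i + h))) := by
    intro i
    have h1 : x i ≠ 0 := (hx i).ne'
    have h2 : x i + h ≠ 0 := (hxh i).ne'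
    field_simp
    ring
  have hSid : (∑ i, w i / (x i + h)) = S - h * A + h ^ 2 * B := by
    rw [hSdef, hAdef, hBdef, Finset.mul_sum, Finset.mul_sum, ← Finset.sum_sub_distrib,
      ← Finset.sum_add_distrib]
    exact Finset.sum_congr rfl fun i _ => key i
  have hS' : (∑ i, w i / (x i + h)) = 1 + h ^ 2 * B := by rw [hSid, hhA]; ring
  have hS'1 : 1 ≤ ∑ i, w i / (x i + h) := by nlinarith [sq_nonneg h]
  refine ⟨hh0, hS'1, ?_⟩
  -- Cauchy–Schwarz:  B² ≤ D * A'
  set D : ℝ := ∑ i, w i / (x i) ^ 4 with hDdef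
  set A' : ℝ := ∑ i, w i / (x i + h) ^ 2 with hA'def
  have hA' : 0 < A' :=
    Finset.sum_pos (fun i _ => div_pos (hw0 i) (by have := hxh i; positivity)) hne
  have hCS : B ^ 2 ≤ D * A' := by
    rw [hBdef, hDdef, hA'def]
    refine Finset.sum_sq_le_sum_mul_sum_of_sq_eq_mul _
      (fun i _ => div_nonneg (hw0 i).le (by have := hx i; positivity))
      (fun i _ => div_nonneg (hw0 i).le (by have := hxh i; positivity)) ?_
    intro i _
    have h1 : x i ≠ 0 := (hx i).ne'
    have h2 : x i + h ≠ 0 := (hxh i).ne'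
    field_simp
  -- D ≤ A / m²
  have hD : D ≤ A / m ^ 2 := by
    rw [hDdef, hAdef, Finset.sum_div]
    refine Finset.sum_le_sum fun i _ => ?_
    rw [div_div]
    apply div_le_div_of_nonneg_left (hw0 i).le (by have := hx i; positivity)
    have h1 : m ^ 2 ≤ (x i) ^ 2 := by nlinarith [hxm i, hm]
    nlinarith [mul_le_mul_of_nonneg_left h1 (sq_nonneg (x i))]
  -- combine
  have hnum : ((∑ i, w i / (x i + h)) - 1) ^ 2 = h ^ 4 * B ^ 2 := by
    rw [hS']; ring
  have step1 : ((∑ i, w i / (x i + h)) - 1) ^ 2 / A' ≤ h ^ 4 * D := by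
    rw [hnum, div_le_iff₀ hA']
    calc h ^ 4 * B ^ 2 ≤ h ^ 4 * (D * A') := by
          apply mul_le_mul_of_nonneg_left hCS (by positivity)
      _ = h ^ 4 * D * A' := by ring
  have hRHS : (((S : ℝ)) - 1) ^ 2 / A * (h ^ 2 / m ^ 2) = h ^ 4 * (A / m ^ 2) := by
    rw [← hhA]
    field_simp
  calc ((∑ i, w i / (x i + h)) - 1) ^ 2 / A' ≤ h ^ 4 * D := step1
    _ ≤ h ^ 4 * (A / m ^ 2) := by apply mul_le_mul_of_nonneg_left hD (by positivity)
    _ = ((S : ℝ) - 1) ^ 2 / A * (h ^ 2 / m ^ 2) := hRHS.symm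

set_option maxHeartbeats 1000000 in

/-- For every t ≥ 0, the Newton decrement of the Newton iterates satisfies
δ(λ_t)² = ψ'(λ_t)²/ψ''(λ_t) < (2d)⁷/16^t. -/
theorem stmt_11 (d : ℕ) (hd : 0 < d) (η : ℝ) (hη : 0 < η) (g p : Fin d → ℝ)
    (hp : ∀ i, -1 ≤ η * p i ∧ η * p i ≤ 0)
    (istar : Fin d) (histar : ∀ i, g istar ≤ g i)
    (lam : ℕ → ℝ) (hlam0 : lam 0 = 1 - η * g istar)
    (hrec : ∀ t : ℕ, lam (t + 1) = lam t -
      (1 - ∑ i, (1 - η * p i) / (lam t + η * g i)) /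
        (∑ i, (1 - η * p i) / (lam t + η * g i) ^ 2)) :
    ∀ t : ℕ,
      (1 - ∑ i, (1 - η * p i) / (lam t + η * g i)) ^ 2 /
          (∑ i, (1 - η * p i) / (lam t + η * g i) ^ 2) <
        (2 * (d : ℝ)) ^ 7 / 16 ^ t := by
  have hw1 : ∀ i, 1 ≤ 1 - η * p i := fun i => by have := (hp i).2; linarith
  have hw2 : ∀ i, 1 - η * p i ≤ 2 := fun i => by have := (hp i).1; linarith
  have hne : (Finset.univ : Finset (Fin d)).Nonempty := ⟨istar, Finset.mem_univ istar⟩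
  have hd1 : (1 : ℝ) ≤ d := by exact_mod_cast hd
  -- the main invariant
  have main : ∀ t : ℕ, 1 ≤ lam t + η * g istar ∧
      (1 ≤ ∑ i, (1 - η * p i) / (lam t + η * g i)) ∧
      (1 - ∑ i, (1 - η * p i) / (lam t + η * g i)) ^ 2 /
          (∑ i, (1 - η * p i) / (lam t + η * g i) ^ 2)
        ≤ 2 * (d : ℝ) * (lam t + η * g istar) ^ 4 / 16 ^ t := by
    intro t
    induction t with
    | zero =>
      have hm0 : lam 0 + η * g istar = 1 := by rw [hlam0]; ring
      have hxm : ∀ i, (1 : ℝ) ≤ lam 0 + η * g i := by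
        intro i
        have : η * g istar ≤ η * g i := mul_le_mul_of_nonneg_left (histar i) hη.le
        linarith [hm0]
      have hx : ∀ i, (0 : ℝ) < lam 0 + η * g i := fun i => lt_of_lt_of_le one_pos (hxm i)
      have hS0 : 1 ≤ ∑ i, (1 - η * p i) / (lam 0 + η * g i) := by
        have h1 : (1 - η * p istar) / (lam 0 + η * g istar)
            ≤ ∑ i, (1 - η * p i) / (lam 0 + η * g i) :=
          Finset.single_le_sum (f := fun i => (1 - η * p i) / (lam 0 + η * g i))
            (fun i _ => div_nonneg (by linarith [hw1 i]) (hx i).le) (Finset.mem_univ istar)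
        rw [hm0, div_one] at h1
        linarith [hw1 istar]
      have hA0 : 0 < ∑ i, (1 - η * p i) / (lam 0 + η * g i) ^ 2 :=
        Finset.sum_pos (fun i _ => div_pos (by linarith [hw1 i]) (by have := hx i; positivity))
          hne
      refine ⟨le_of_eq hm0.symm, hS0, ?_⟩
      rw [hm0]
      norm_num
      -- goal: (1 - S)^2 / A ≤ 2 * d
      rw [div_le_iff₀ hA0]
      have hCS : (∑ i, (1 - η * p i) / (lam 0 + η * g i)) ^ 2
          ≤ (∑ i, (1 - η * p i)) * ∑ i, (1 - η * p i) / (lam 0 + η * g i) ^ 2 := by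
        refine Finset.sum_sq_le_sum_mul_sum_of_sq_eq_mul _
          (fun i _ => by linarith [hw1 i])
          (fun i _ => div_nonneg (by linarith [hw1 i]) (by have := hx i; positivity)) ?_
        intro i _
        have h1 : lam 0 + η * g i ≠ 0 := (hx i).ne'
        field_simp
      have hsw : (∑ i, (1 - η * p i)) ≤ 2 * (d : ℝ) := by
        calc (∑ i, (1 - η * p i)) ≤ ∑ _i : Fin d, (2 : ℝ) :=
              Finset.sum_le_sum fun i _ => hw2 i
          _ = 2 * d := by simp [Finset.sum_const, mul_comm]
      have h2 : (1 - ∑ i, (1 - η * p i) / (lam 0 + η * g i)) ^ 2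
          ≤ (∑ i, (1 - η * p i) / (lam 0 + η * g i)) ^ 2 := by nlinarith [hS0]
      nlinarith [hA0, hCS, hsw, h2, mul_le_mul_of_nonneg_right hsw hA0.le]
    | succ t ih =>
      obtain ⟨hm, hS, hδ⟩ := ih
      have hm0 : (0 : ℝ) < lam t + η * g istar := lt_of_lt_of_le one_pos hm
      have hxm : ∀ i, lam t + η * g istar ≤ lam t + η * g i := by
        intro i
        have : η * g istar ≤ η * g i := mul_le_mul_of_nonneg_left (histar i) hη.le
        linarith
      obtain ⟨hh0, hS', hcontr⟩ := newton_step_s11 hd (fun i => 1 - η * p i)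
        (fun i => lam t + η * g i) hw1 (lam t + η * g istar)
        (((∑ i, (1 - η * p i) / (lam t + η * g i)) - 1) /
          (∑ i, (1 - η * p i) / (lam t + η * g i) ^ 2)) hm0 hxm hS rfl
      set h : ℝ := ((∑ i, (1 - η * p i) / (lam t + η * g i)) - 1) /
          (∑ i, (1 - η * p i) / (lam t + η * g i) ^ 2) with hhdef
      have hlam' : lam (t + 1) = lam t + h := by rw [hrec t, hhdef]; ring
      have hxt : ∀ i : Fin d, lam (t + 1) + η * g i = (lam t + η * g i) + h := fun i => by
        rw [hlam']; ring
      have hmt : lam (t + 1) + η * g istar = (lam t + η * g istar) + h := hxt istar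
      simp only [hxt, hmt]
      refine ⟨by linarith, hS', ?_⟩
      set m : ℝ := lam t + η * g istar with hmdef
      set S : ℝ := ∑ i, (1 - η * p i) / (lam t + η * g i) with hSdef
      set A : ℝ := ∑ i, (1 - η * p i) / (lam t + η * g i) ^ 2 with hAdef
      have hsq : ∀ a : ℝ, (1 - a) ^ 2 = (a - 1) ^ 2 := fun a => by ring
      rw [hsq] at hδ ⊢
      have step2 : ((∑ i, (1 - η * p i) / ((lam t + η * g i) + h)) - 1) ^ 2 /
            (∑ i, (1 - η * p i) / ((lam t + η * g i) + h) ^ 2)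
          ≤ (2 * (d : ℝ) * m ^ 4 / 16 ^ t) * (h ^ 2 / m ^ 2) := by
        refine le_trans hcontr ?_
        apply mul_le_mul_of_nonneg_right hδ (by positivity)
      refine le_trans step2 ?_
      have hkey : 16 * (h ^ 2 * m ^ 2) ≤ (m + h) ^ 4 := by
        nlinarith [mul_nonneg (sq_nonneg (m - h)) (sq_nonneg (m + h)),
          mul_nonneg (mul_nonneg hh0 hm0.le) (sq_nonneg (m - h))]
      have e1 : 2 * (d : ℝ) * m ^ 4 / 16 ^ t * (h ^ 2 / m ^ 2)
          = 2 * d * (h ^ 2 * m ^ 2) / 16 ^ t := by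
        field_simp
      rw [e1, pow_succ (16:ℝ) t]
      rw [div_le_div_iff₀ (by positivity) (by positivity)]
      have h16 : (0:ℝ) < 16 ^ t := by positivity
      nlinarith [mul_le_mul_of_nonneg_left hkey (by positivity : (0:ℝ) ≤ 2 * (d:ℝ) * 16 ^ t)]
  -- conclude
  intro t
  obtain ⟨hm, hS, hδ⟩ := main t
  set m : ℝ := lam t + η * g istar with hmdef
  have hm0 : (0 : ℝ) < m := lt_of_lt_of_le one_pos hm
  have hxm : ∀ i, m ≤ lam t + η * g i := by
    intro i
    have : η * g istar ≤ η * g i := mul_le_mul_of_nonneg_left (histar i) hη.le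
    simp only [hmdef]
    linarith
  -- m ≤ 2d
  have hm2d : m ≤ 2 * (d : ℝ) := by
    have hSle : (∑ i, (1 - η * p i) / (lam t + η * g i)) ≤ ∑ _i : Fin d, 2 / m := by
      refine Finset.sum_le_sum fun i _ => ?_
      exact div_le_div₀ (by norm_num) (hw2 i) hm0 (hxm i)
    have : (∑ _i : Fin d, (2 : ℝ) / m) = 2 * d / m := by
      rw [Finset.sum_const, Finset.card_univ, Fintype.card_fin, nsmul_eq_mul]
      ring
    rw [this] at hSle
    have h1 : (1 : ℝ) ≤ 2 * d / m := le_trans hS hSle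
    rw [le_div_iff₀ hm0] at h1
    linarith
  have hmp : m ^ 4 ≤ (2 * (d : ℝ)) ^ 4 := by
    apply pow_le_pow_left₀ hm0.le hm2d
  have hfin : 2 * (d : ℝ) * m ^ 4 / 16 ^ t < (2 * (d : ℝ)) ^ 7 / 16 ^ t := by
    have h16 : (0:ℝ) < (16:ℝ) ^ t := by positivity
    have ha : (1:ℝ) < (2 * (d:ℝ)) ^ 2 := by nlinarith
    have h57 : (2 * (d:ℝ)) ^ 5 < (2 * (d:ℝ)) ^ 7 := by
      have h5 : (0:ℝ) < (2 * (d:ℝ)) ^ 5 := pow_pos (by linarith) 5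
      calc (2 * (d:ℝ)) ^ 5 = (2 * (d:ℝ)) ^ 5 * 1 := by ring
        _ < (2 * (d:ℝ)) ^ 5 * (2 * (d:ℝ)) ^ 2 := by
            exact mul_lt_mul_of_pos_left ha h5
        _ = (2 * (d:ℝ)) ^ 7 := by ring
    have h25 : 2 * (d:ℝ) * m ^ 4 ≤ (2 * (d:ℝ)) ^ 5 := by
      calc 2 * (d:ℝ) * m ^ 4 ≤ 2 * (d:ℝ) * (2 * (d:ℝ)) ^ 4 :=
            mul_le_mul_of_nonneg_left hmp (by linarith)
        _ = (2 * (d:ℝ)) ^ 5 := by ring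
    rw [div_lt_div_iff₀ (by positivity) (by positivity)]
    exact mul_lt_mul_of_pos_right (lt_of_le_of_lt h25 h57) h16
  exact lt_of_le_of_lt hδ hfin
end

section
/- Let T ≥ 1 be an integer and let x be in the probability simplex in ℝ^d (x(i) ≥ 0 for all i, Σ_{i=1}^d x(i) = 1). Define x'(i) = (1 − 1/T)·x(i) + 1/(dT). Then x' lies in the probability simplex with x'(i) > 0 for all i, and the shifted log barrier satisfies h(x') = −d·log d − Σ_{i=1}^d log x'(i) ≤ d·log T. -/
/-- Let T ≥ 1 be an integer and x in the probability simplex in ℝ^d.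
Define x'(i) = (1 - 1/T)·x(i) + 1/(dT). Then x' lies in the probability simplex with
x'(i) > 0 for all i, and the shifted log barrier satisfies
h(x') = -d log d - ∑ i, log (x' i) ≤ d log T. -/
theorem stmt_13 (d : ℕ) (hd : 0 < d) (T : ℕ) (hT : 1 ≤ T)
    (x : Fin d → ℝ) (hx0 : ∀ i, 0 ≤ x i) (hx1 : ∑ i, x i = 1)
    (x' : Fin d → ℝ)
    (hx' : ∀ i, x' i = (1 - 1 / (T : ℝ)) * x i + 1 / ((d : ℝ) * T)) :
    (∀ i, 0 < x' i) ∧ (∑ i, x' i = 1) ∧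
    -(d : ℝ) * Real.log d - ∑ i, Real.log (x' i) ≤ (d : ℝ) * Real.log T := by
  have hdR : (0 : ℝ) < d := by exact_mod_cast hd
  have hTR : (1 : ℝ) ≤ T := by exact_mod_cast hT
  have hT0 : (0 : ℝ) < T := lt_of_lt_of_le one_pos hTR
  have hdT : (0 : ℝ) < (d : ℝ) * T := mul_pos hdR hT0
  have hco : (0 : ℝ) ≤ 1 - 1 / (T : ℝ) := by
    have : 1 / (T : ℝ) ≤ 1 := by
      rw [div_le_one hT0]; exact hTR
    linarith
  have hlow : ∀ i, 1 / ((d : ℝ) * T) ≤ x' i := by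
    intro i
    rw [hx' i]
    nlinarith [hx0 i, mul_nonneg hco (hx0 i)]
  have hpos : ∀ i, 0 < x' i :=
    fun i => lt_of_lt_of_le (by positivity) (hlow i)
  refine ⟨hpos, ?_, ?_⟩
  · have : ∑ i, x' i = (1 - 1 / (T : ℝ)) * (∑ i, x i) + d * (1 / ((d : ℝ) * T)) := by
      simp [hx', Finset.sum_add_distrib, ← Finset.mul_sum]
    rw [this, hx1]
    field_simp
    ring
  · have hlog : ∀ i, -(Real.log d + Real.log T) ≤ Real.log (x' i) := by
      intro i
      have h1 : Real.log (1 / ((d : ℝ) * T)) ≤ Real.log (x' i) :=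
        Real.log_le_log (by positivity) (hlow i)
      rw [Real.log_div one_ne_zero (ne_of_gt hdT), Real.log_one,
        Real.log_mul (ne_of_gt hdR) (ne_of_gt hT0)] at h1
      linarith
    have hsum : ∑ i, (-(Real.log d + Real.log T)) ≤ ∑ i, Real.log (x' i) :=
      Finset.sum_le_sum fun i _ => hlog i
    simp only [Finset.sum_const, Finset.card_univ, Fintype.card_fin, nsmul_eq_mul] at hsum
    nlinarith
end
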